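/- There exists a constant C>0, depending only on L, such that for every positive integer N (with h=L/N) and every cell-centered grid function f on Omega=(0,L)^3 (with Neumann ghost values), the discrete Sobolev inequality ||f||_4 <= C*( ||f||_2^2 + ||grad_h f||_2^2 )^{1/2} holds. -/

import Mathlib

open Finset

noncomputable section

/-! Finite–difference / MAC-grid framework on Ω = (0,L)³ with N cells per
direction and mesh size h = L/N.  A cell-centered grid function is a map
`ℤ → ℤ → ℤ → ℝ` whose meaningful values are at indices in {1,…,N}³; ghost
values are given by the discrete homogeneous Neumann (reflection) condition,
implemented by clamping indices to {1,…,N}.  The x-component of a MAC vector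
field is recorded so that `ux i j k` is the value at the x-face (i+1/2,j,k),
0 ≤ i ≤ N, 1 ≤ j,k ≤ N (analogously for the y,z components), and the
free-slip condition prescribes the tangential ghost values by reflection,
again implemented by clamping the tangential indices. -/

/-- Index clamped into `{1,…,N}`: implements the reflection ghost values. -/
def clampIdx (N : ℕ) (i : ℤ) : ℤ := max 1 (min i (N : ℤ))

/-- Extension of a cell-centered grid function by the discrete homogeneous
Neumann (reflection) ghost values. -/
def nExt (N : ℕ) (φ : ℤ → ℤ → ℤ → ℝ) (i j k : ℤ) : ℝ :=
  φ (clampIdx N i) (clampIdx N j) (clampIdx N k)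

/-- The cell indices `{1,…,N}`. -/
def cellIdx (N : ℕ) : Finset ℤ := Finset.Icc 1 (N : ℤ)

/-- The interior-face indices `{1,…,N-1}`. -/
def faceIdx (N : ℕ) : Finset ℤ := Finset.Icc 1 ((N : ℤ) - 1)

/-- Cell-centered discrete inner product `(φ,ψ) = h³ Σ φψ`. -/
def cip (N : ℕ) (h : ℝ) (φ ψ : ℤ → ℤ → ℤ → ℝ) : ℝ :=
  h ^ 3 * ∑ i ∈ cellIdx N, ∑ j ∈ cellIdx N, ∑ k ∈ cellIdx N, φ i j k * ψ i j k

/-- Zero discrete mean: `Σ_{i,j,k=1}^N φ_{ijk} = 0`. -/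
def zeroMean (N : ℕ) (φ : ℤ → ℤ → ℤ → ℝ) : Prop :=
  ∑ i ∈ cellIdx N, ∑ j ∈ cellIdx N, ∑ k ∈ cellIdx N, φ i j k = 0

/-- Two cell-centered functions agree on all cells. -/
def CellEqOn (N : ℕ) (φ ψ : ℤ → ℤ → ℤ → ℝ) : Prop :=
  ∀ i ∈ cellIdx N, ∀ j ∈ cellIdx N, ∀ k ∈ cellIdx N, φ i j k = ψ i j k

/-- Discrete maximum norm over the cells. -/
def cInf (N : ℕ) (φ : ℤ → ℤ → ℤ → ℝ) : ℝ :=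
  sSup {r : ℝ | ∃ i ∈ cellIdx N, ∃ j ∈ cellIdx N, ∃ k ∈ cellIdx N, r = |φ i j k|}

/-- `D_x φ` at the x-face `(i+1/2,j,k)` (recorded at index `(i,j,k)`);
it vanishes at the boundary faces `i = 0, N` by the Neumann ghost values. -/
def Dx (N : ℕ) (h : ℝ) (φ : ℤ → ℤ → ℤ → ℝ) (i j k : ℤ) : ℝ :=
  (nExt N φ (i + 1) j k - nExt N φ i j k) / h

/-- `D_y φ` at the y-face `(i,j+1/2,k)`. -/
def Dy (N : ℕ) (h : ℝ) (φ : ℤ → ℤ → ℤ → ℝ) (i j k : ℤ) : ℝ :=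
  (nExt N φ i (j + 1) k - nExt N φ i j k) / h

/-- `D_z φ` at the z-face `(i,j,k+1/2)`. -/
def Dz (N : ℕ) (h : ℝ) (φ : ℤ → ℤ → ℤ → ℝ) (i j k : ℤ) : ℝ :=
  (nExt N φ i j (k + 1) - nExt N φ i j k) / h

/-- Cell-centered discrete Laplacian, using the Neumann ghost values. -/
def lapC (N : ℕ) (h : ℝ) (φ : ℤ → ℤ → ℤ → ℝ) (i j k : ℤ) : ℝ :=
  (nExt N φ (i + 1) j k + nExt N φ (i - 1) j k + nExt N φ i (j + 1) k +
      nExt N φ i (j - 1) k + nExt N φ i j (k + 1) + nExt N φ i j (k - 1) -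
      6 * nExt N φ i j k) / h ^ 2

/-- `‖∇_h φ‖₂²`: sum of squared differences over all interior faces. -/
def gradSq (N : ℕ) (h : ℝ) (φ : ℤ → ℤ → ℤ → ℝ) : ℝ :=
  h ^ 3 *
    ((∑ i ∈ faceIdx N, ∑ j ∈ cellIdx N, ∑ k ∈ cellIdx N, Dx N h φ i j k ^ 2) +
      (∑ i ∈ cellIdx N, ∑ j ∈ faceIdx N, ∑ k ∈ cellIdx N, Dy N h φ i j k ^ 2) +
      (∑ i ∈ cellIdx N, ∑ j ∈ cellIdx N, ∑ k ∈ faceIdx N, Dz N h φ i j k ^ 2))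

/-- Face inner product `[f,g]_x`. -/
def ipFX (N : ℕ) (h : ℝ) (f g : ℤ → ℤ → ℤ → ℝ) : ℝ :=
  h ^ 3 / 2 * ∑ i ∈ cellIdx N, ∑ j ∈ cellIdx N, ∑ k ∈ cellIdx N,
    (f i j k * g i j k + f (i - 1) j k * g (i - 1) j k)

/-- Face inner product `[f,g]_y`. -/
def ipFY (N : ℕ) (h : ℝ) (f g : ℤ → ℤ → ℤ → ℝ) : ℝ :=
  h ^ 3 / 2 * ∑ i ∈ cellIdx N, ∑ j ∈ cellIdx N, ∑ k ∈ cellIdx N,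
    (f i j k * g i j k + f i (j - 1) k * g i (j - 1) k)

/-- Face inner product `[f,g]_z`. -/
def ipFZ (N : ℕ) (h : ℝ) (f g : ℤ → ℤ → ℤ → ℝ) : ℝ :=
  h ^ 3 / 2 * ∑ i ∈ cellIdx N, ∑ j ∈ cellIdx N, ∑ k ∈ cellIdx N,
    (f i j k * g i j k + f i j (k - 1) * g i j (k - 1))

/-- MAC inner product of two vector fields. -/
def macIP (N : ℕ) (h : ℝ) (ux uy uz vx vy vz : ℤ → ℤ → ℤ → ℝ) : ℝ :=
  ipFX N h ux vx + ipFY N h uy vy + ipFZ N h uz vz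

/-- Discrete divergence at the cell `(i,j,k)`. -/
def divH (h : ℝ) (ux uy uz : ℤ → ℤ → ℤ → ℝ) (i j k : ℤ) : ℝ :=
  (ux i j k - ux (i - 1) j k + uy i j k - uy i (j - 1) k +
    uz i j k - uz i j (k - 1)) / h

/-- No-penetration boundary condition: the normal boundary face values vanish. -/
def NoPen (N : ℕ) (ux uy uz : ℤ → ℤ → ℤ → ℝ) : Prop :=
  (∀ j ∈ cellIdx N, ∀ k ∈ cellIdx N, ux 0 j k = 0 ∧ ux (N : ℤ) j k = 0) ∧
  (∀ i ∈ cellIdx N, ∀ k ∈ cellIdx N, uy i 0 k = 0 ∧ uy i (N : ℤ) k = 0) ∧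
  (∀ i ∈ cellIdx N, ∀ j ∈ cellIdx N, uz i j 0 = 0 ∧ uz i j (N : ℤ) = 0)

/-- Free-slip (reflection) extension of the x-face component in the
tangential directions. -/
def fExtX (N : ℕ) (f : ℤ → ℤ → ℤ → ℝ) (i j k : ℤ) : ℝ :=
  f i (clampIdx N j) (clampIdx N k)

/-- Free-slip extension of the y-face component. -/
def fExtY (N : ℕ) (f : ℤ → ℤ → ℤ → ℝ) (i j k : ℤ) : ℝ :=
  f (clampIdx N i) j (clampIdx N k)

/-- Free-slip extension of the z-face component. -/
def fExtZ (N : ℕ) (f : ℤ → ℤ → ℤ → ℝ) (i j k : ℤ) : ℝ :=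
  f (clampIdx N i) (clampIdx N j) k

/-- Face-centered discrete Laplacian of the x-component (seven-point stencil,
free-slip ghost values in the tangential directions). -/
def lapFX (N : ℕ) (h : ℝ) (f : ℤ → ℤ → ℤ → ℝ) (i j k : ℤ) : ℝ :=
  (fExtX N f (i + 1) j k + fExtX N f (i - 1) j k + fExtX N f i (j + 1) k +
      fExtX N f i (j - 1) k + fExtX N f i j (k + 1) + fExtX N f i j (k - 1) -
      6 * fExtX N f i j k) / h ^ 2

/-- Face-centered discrete Laplacian of the y-component. -/
def lapFY (N : ℕ) (h : ℝ) (f : ℤ → ℤ → ℤ → ℝ) (i j k : ℤ) : ℝ :=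
  (fExtY N f (i + 1) j k + fExtY N f (i - 1) j k + fExtY N f i (j + 1) k +
      fExtY N f i (j - 1) k + fExtY N f i j (k + 1) + fExtY N f i j (k - 1) -
      6 * fExtY N f i j k) / h ^ 2

/-- Face-centered discrete Laplacian of the z-component. -/
def lapFZ (N : ℕ) (h : ℝ) (f : ℤ → ℤ → ℤ → ℝ) (i j k : ℤ) : ℝ :=
  (fExtZ N f (i + 1) j k + fExtZ N f (i - 1) j k + fExtZ N f i (j + 1) k +
      fExtZ N f i (j - 1) k + fExtZ N f i j (k + 1) + fExtZ N f i j (k - 1) -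
      6 * fExtZ N f i j k) / h ^ 2

/-- Face average `A_x φ` at the x-face `(i+1/2,j,k)`. -/
def AxF (N : ℕ) (φ : ℤ → ℤ → ℤ → ℝ) (i j k : ℤ) : ℝ :=
  (nExt N φ (i + 1) j k + nExt N φ i j k) / 2

/-- Face average `A_y φ`. -/
def AyF (N : ℕ) (φ : ℤ → ℤ → ℤ → ℝ) (i j k : ℤ) : ℝ :=
  (nExt N φ i (j + 1) k + nExt N φ i j k) / 2

/-- Face average `A_z φ`. -/
def AzF (N : ℕ) (φ : ℤ → ℤ → ℤ → ℝ) (i j k : ℤ) : ℝ :=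
  (nExt N φ i j (k + 1) + nExt N φ i j k) / 2

/-- Discrete `ℓᵖ` norm of a cell-centered function. -/
def cNormP (N : ℕ) (h p : ℝ) (φ : ℤ → ℤ → ℤ → ℝ) : ℝ :=
  (h ^ 3 * ∑ i ∈ cellIdx N, ∑ j ∈ cellIdx N, ∑ k ∈ cellIdx N, |φ i j k| ^ p) ^ (1 / p)

section SobolevAux

open Finset

private lemma clamp_eq {N : ℕ} {i : ℤ} (h1 : 1 ≤ i) (h2 : i ≤ (N : ℤ)) : clampIdx N i = i := by
  unfold clampIdx; omega

private lemma mem_cell {N : ℕ} {x : ℤ} : x ∈ cellIdx N ↔ 1 ≤ x ∧ x ≤ (N : ℤ) := by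
  simp [cellIdx]

private lemma face_subset_cell {N : ℕ} : faceIdx N ⊆ cellIdx N := by
  intro x hx
  simp only [faceIdx, Finset.mem_Icc] at hx
  simp only [cellIdx, Finset.mem_Icc]
  omega

private lemma sq_add_abs (a b : ℝ) : (|a| + |b|) ^ 2 ≤ 2 * a ^ 2 + 2 * b ^ 2 := by
  nlinarith [sq_nonneg (|a| - |b|), sq_abs a, sq_abs b]

/-- Cauchy–Schwarz bound for the total variation of squares. -/
private lemma tv_sq {α : Type*} (s : Finset α) (A B : α → ℝ) :
    ∑ x ∈ s, |A x ^ 2 - B x ^ 2| ≤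
      Real.sqrt (∑ x ∈ s, (2 * A x ^ 2 + 2 * B x ^ 2)) *
        Real.sqrt (∑ x ∈ s, (A x - B x) ^ 2) := by
  have h1 : ∑ x ∈ s, |A x ^ 2 - B x ^ 2| ≤ ∑ x ∈ s, (|A x| + |B x|) * |A x - B x| := by
    refine Finset.sum_le_sum fun x _ => ?_
    rw [show A x ^ 2 - B x ^ 2 = (A x + B x) * (A x - B x) by ring, abs_mul]
    exact mul_le_mul_of_nonneg_right (abs_add_le _ _) (abs_nonneg _)
  refine h1.trans ?_
  calc ∑ x ∈ s, (|A x| + |B x|) * |A x - B x|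
      ≤ Real.sqrt (∑ x ∈ s, (|A x| + |B x|) ^ 2) *
          Real.sqrt (∑ x ∈ s, |A x - B x| ^ 2) := Real.sum_mul_le_sqrt_mul_sqrt _ _ _
    _ = Real.sqrt (∑ x ∈ s, (|A x| + |B x|) ^ 2) *
          Real.sqrt (∑ x ∈ s, (A x - B x) ^ 2) := by simp [sq_abs]
    _ ≤ _ := by
        refine mul_le_mul_of_nonneg_right ?_ (Real.sqrt_nonneg _)
        exact Real.sqrt_le_sqrt (Finset.sum_le_sum fun x _ => sq_add_abs (A x) (B x))

/-- `tv_sq` for double sums. -/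
private lemma tv_sq2 {α β : Type*} (s : Finset α) (t : Finset β) (A B : α → β → ℝ) :
    ∑ x ∈ s, ∑ y ∈ t, |A x y ^ 2 - B x y ^ 2| ≤
      Real.sqrt (∑ x ∈ s, ∑ y ∈ t, (2 * A x y ^ 2 + 2 * B x y ^ 2)) *
        Real.sqrt (∑ x ∈ s, ∑ y ∈ t, (A x y - B x y) ^ 2) := by
  have e1 := Finset.sum_product' (s := s) (t := t)
    (f := fun x y => |A x y ^ 2 - B x y ^ 2|)
  have e2 := Finset.sum_product' (s := s) (t := t)
    (f := fun x y => 2 * A x y ^ 2 + 2 * B x y ^ 2)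
  have e3 := Finset.sum_product' (s := s) (t := t)
    (f := fun x y => (A x y - B x y) ^ 2)
  rw [← e1, ← e2, ← e3]
  exact tv_sq (s ×ˢ t) (fun p => A p.1 p.2) (fun p => B p.1 p.2)

/-- `tv_sq` for triple sums. -/
private lemma tv_sq3 {α β γ : Type*} (s : Finset α) (t : Finset β) (r : Finset γ)
    (A B : α → β → γ → ℝ) :
    ∑ x ∈ s, ∑ y ∈ t, ∑ z ∈ r, |A x y z ^ 2 - B x y z ^ 2| ≤
      Real.sqrt (∑ x ∈ s, ∑ y ∈ t, ∑ z ∈ r, (2 * A x y z ^ 2 + 2 * B x y z ^ 2)) *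
        Real.sqrt (∑ x ∈ s, ∑ y ∈ t, ∑ z ∈ r, (A x y z - B x y z) ^ 2) := by
  have key := tv_sq2 s (t ×ˢ r) (fun x p => A x p.1 p.2) (fun x p => B x p.1 p.2)
  have c1 : ∀ (F : α → β → γ → ℝ) (x : α),
      ∑ p ∈ t ×ˢ r, F x p.1 p.2 = ∑ y ∈ t, ∑ z ∈ r, F x y z := by
    intro F x
    have := Finset.sum_product' (s := t) (t := r) (f := fun y z => F x y z)
    simpa using this
  have d1 : ∑ x ∈ s, ∑ p ∈ t ×ˢ r, |A x p.1 p.2 ^ 2 - B x p.1 p.2 ^ 2| =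
      ∑ x ∈ s, ∑ y ∈ t, ∑ z ∈ r, |A x y z ^ 2 - B x y z ^ 2| :=
    Finset.sum_congr rfl fun x _ => c1 (fun x y z => |A x y z ^ 2 - B x y z ^ 2|) x
  have d2 : ∑ x ∈ s, ∑ p ∈ t ×ˢ r, (2 * A x p.1 p.2 ^ 2 + 2 * B x p.1 p.2 ^ 2) =
      ∑ x ∈ s, ∑ y ∈ t, ∑ z ∈ r, (2 * A x y z ^ 2 + 2 * B x y z ^ 2) :=
    Finset.sum_congr rfl fun x _ =>
      c1 (fun x y z => 2 * A x y z ^ 2 + 2 * B x y z ^ 2) x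
  have d3 : ∑ x ∈ s, ∑ p ∈ t ×ˢ r, (A x p.1 p.2 - B x p.1 p.2) ^ 2 =
      ∑ x ∈ s, ∑ y ∈ t, ∑ z ∈ r, (A x y z - B x y z) ^ 2 :=
    Finset.sum_congr rfl fun x _ => c1 (fun x y z => (A x y z - B x y z) ^ 2) x
  rw [← d1, ← d2, ← d3]
  exact key

private lemma sqrt_four_mul (Q : ℝ) (_hQ : 0 ≤ Q) :
    Real.sqrt (4 * Q) = 2 * Real.sqrt Q := by
  rw [show (4 : ℝ) * Q = 2 ^ 2 * Q by ring, Real.sqrt_mul (by positivity),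
    Real.sqrt_sq (by norm_num : (0:ℝ) ≤ 2)]

private lemma tele (u : ℤ → ℝ) (m : ℤ) :
    ∀ i, m ≤ i → u i - u m = ∑ l ∈ Finset.Ico m i, (u (l + 1) - u l) := by
  refine Int.le_induction ?_ ?_
  · simp
  · intro i hmi ih
    have hins : Finset.Ico m (i + 1) = insert i (Finset.Ico m i) := by
      ext x; simp only [Finset.mem_Ico, Finset.mem_insert]; omega
    rw [hins, Finset.sum_insert (by simp [Finset.mem_Ico]), ← ih]
    ring

/-- 1D discrete Agmon-type inequality: any value is at most the average plus
the total variation. -/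
private lemma agmon1 {N : ℕ} (hN : 0 < N) (u : ℤ → ℝ) {i : ℤ} (hi : i ∈ cellIdx N) :
    u i ≤ (N : ℝ)⁻¹ * ∑ m ∈ cellIdx N, u m + ∑ l ∈ faceIdx N, |u (l + 1) - u l| := by
  have hsub : ∀ a b : ℤ, 1 ≤ a → b ≤ (N : ℤ) → Finset.Ico a b ⊆ faceIdx N := by
    intro a b ha hb x hx
    simp only [Finset.mem_Ico] at hx
    simp only [faceIdx, Finset.mem_Icc]
    omega
  have habs : ∀ m ∈ cellIdx N, u i - u m ≤ ∑ l ∈ faceIdx N, |u (l + 1) - u l| := by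
    intro m hm
    rcases le_total m i with hmi | him
    · rw [tele u m i hmi]
      refine (Finset.sum_le_sum fun l _ => le_abs_self _).trans ?_
      exact Finset.sum_le_sum_of_subset_of_nonneg
        (hsub m i (mem_cell.mp hm).1 (mem_cell.mp hi).2) fun _ _ _ => abs_nonneg _
    · have h2 := tele u i m him
      have h3 : u i - u m = ∑ l ∈ Finset.Ico i m, (-(u (l + 1) - u l)) := by
        rw [Finset.sum_neg_distrib, ← h2]; ring
      rw [h3]
      refine (Finset.sum_le_sum fun l _ => neg_le_abs _).trans ?_
      exact Finset.sum_le_sum_of_subset_of_nonneg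
        (hsub i m (mem_cell.mp hi).1 (mem_cell.mp hm).2) fun _ _ _ => abs_nonneg _
  have hstep : ∀ m ∈ cellIdx N, u i ≤ u m + ∑ l ∈ faceIdx N, |u (l + 1) - u l| := by
    intro m hm
    have := habs m hm
    linarith
  have hcard : (cellIdx N).card = N := by
    rw [cellIdx, Int.card_Icc]
    omega
  have hNR : (0 : ℝ) < (N : ℝ) := by exact_mod_cast hN
  have hsum := Finset.sum_le_sum hstep
  rw [Finset.sum_const, hcard, nsmul_eq_mul, Finset.sum_add_distrib, Finset.sum_const, hcard,
    nsmul_eq_mul] at hsum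
  have h5 := mul_le_mul_of_nonneg_left hsum (inv_nonneg.mpr hNR.le)
  calc u i = (N : ℝ)⁻¹ * ((N : ℝ) * u i) := by field_simp
    _ ≤ (N : ℝ)⁻¹ * ((∑ m ∈ cellIdx N, u m) +
          (N : ℝ) * ∑ l ∈ faceIdx N, |u (l + 1) - u l|) := h5
    _ = (N : ℝ)⁻¹ * ∑ m ∈ cellIdx N, u m + ∑ l ∈ faceIdx N, |u (l + 1) - u l| := by
        field_simp

/-- Shifted face sums are dominated by cell sums, for nonnegative data. -/
private lemma sum_shift_le {N : ℕ} (v : ℤ → ℝ) (hv : ∀ m ∈ cellIdx N, 0 ≤ v m) :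
    ∑ m ∈ faceIdx N, v (m + 1) ≤ ∑ m ∈ cellIdx N, v m := by
  have h1 : ∑ m ∈ faceIdx N, v (m + 1) = ∑ m ∈ Finset.Icc (2 : ℤ) (N : ℤ), v m := by
    have h2 : Finset.Icc (2 : ℤ) (N : ℤ) = (faceIdx N).map (addRightEmbedding 1) := by
      rw [faceIdx, Finset.map_add_right_Icc]
      congr 1
      ring
    rw [h2, Finset.sum_map]
    rfl
  rw [h1]
  refine Finset.sum_le_sum_of_subset_of_nonneg ?_ fun m hm _ => hv m hm
  intro x hx
  simp only [Finset.mem_Icc] at hx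
  simp only [cellIdx, Finset.mem_Icc]
  omega

private lemma sum_face_le {N : ℕ} (v : ℤ → ℝ) (hv : ∀ m ∈ cellIdx N, 0 ≤ v m) :
    ∑ m ∈ faceIdx N, v m ≤ ∑ m ∈ cellIdx N, v m :=
  Finset.sum_le_sum_of_subset_of_nonneg face_subset_cell fun m hm _ => hv m hm

/-- 2D discrete Ladyzhenskaya-type inequality on a slice. -/
private lemma slice2D (N : ℕ) (hN : 0 < N) (u : ℤ → ℤ → ℝ) :
    ∑ j ∈ cellIdx N, ∑ k ∈ cellIdx N, u j k ^ 4 ≤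
      3 * ((∑ j ∈ cellIdx N, ∑ k ∈ cellIdx N, u j k ^ 2) ^ 2 * ((N : ℝ)⁻¹) ^ 2
        + (∑ j ∈ cellIdx N, ∑ k ∈ cellIdx N, u j k ^ 2) *
            (∑ m ∈ faceIdx N, ∑ k ∈ cellIdx N, (u (m + 1) k - u m k) ^ 2)
        + (∑ j ∈ cellIdx N, ∑ k ∈ cellIdx N, u j k ^ 2) *
            (∑ j ∈ cellIdx N, ∑ m ∈ faceIdx N, (u j (m + 1) - u j m) ^ 2)) := by
  set Q : ℝ := ∑ j ∈ cellIdx N, ∑ k ∈ cellIdx N, u j k ^ 2 with hQdef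
  set GY : ℝ := ∑ m ∈ faceIdx N, ∑ k ∈ cellIdx N, (u (m + 1) k - u m k) ^ 2 with hGYdef
  set GZ : ℝ := ∑ j ∈ cellIdx N, ∑ m ∈ faceIdx N, (u j (m + 1) - u j m) ^ 2 with hGZdef
  have hQ0 : 0 ≤ Q := by
    rw [hQdef]; exact Finset.sum_nonneg fun _ _ => Finset.sum_nonneg fun _ _ => sq_nonneg _
  have hGY0 : 0 ≤ GY := by
    rw [hGYdef]; exact Finset.sum_nonneg fun _ _ => Finset.sum_nonneg fun _ _ => sq_nonneg _
  have hGZ0 : 0 ≤ GZ := by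
    rw [hGZdef]; exact Finset.sum_nonneg fun _ _ => Finset.sum_nonneg fun _ _ => sq_nonneg _
  set A : ℤ → ℝ := fun k => (N : ℝ)⁻¹ * ∑ m ∈ cellIdx N, u m k ^ 2 +
      ∑ l ∈ faceIdx N, |u (l + 1) k ^ 2 - u l k ^ 2| with hAdef
  set B : ℤ → ℝ := fun j => (N : ℝ)⁻¹ * ∑ m ∈ cellIdx N, u j m ^ 2 +
      ∑ l ∈ faceIdx N, |u j (l + 1) ^ 2 - u j l ^ 2| with hBdef
  have hA0 : ∀ k, 0 ≤ A k := by
    intro k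
    rw [hAdef]
    refine add_nonneg (mul_nonneg (by positivity)
      (Finset.sum_nonneg fun _ _ => sq_nonneg _))
      (Finset.sum_nonneg fun _ _ => abs_nonneg _)
  have hB0 : ∀ j, 0 ≤ B j := by
    intro j
    rw [hBdef]
    refine add_nonneg (mul_nonneg (by positivity)
      (Finset.sum_nonneg fun _ _ => sq_nonneg _))
      (Finset.sum_nonneg fun _ _ => abs_nonneg _)
  have point : ∀ j ∈ cellIdx N, ∀ k ∈ cellIdx N, u j k ^ 4 ≤ A k * B j := by
    intro j hj k hk
    have hα := agmon1 hN (fun j' => u j' k ^ 2) hj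
    have hβ := agmon1 hN (fun k' => u j k' ^ 2) hk
    have h1 : u j k ^ 2 ≤ A k := by simp only [hAdef]; exact hα
    have h2 : u j k ^ 2 ≤ B j := by simp only [hBdef]; exact hβ
    calc u j k ^ 4 = u j k ^ 2 * u j k ^ 2 := by ring
      _ ≤ A k * B j := mul_le_mul h1 h2 (sq_nonneg _) (le_trans (sq_nonneg _) h1)
  have step1 : ∑ j ∈ cellIdx N, ∑ k ∈ cellIdx N, u j k ^ 4 ≤
      (∑ k ∈ cellIdx N, A k) * (∑ j ∈ cellIdx N, B j) := by
    calc ∑ j ∈ cellIdx N, ∑ k ∈ cellIdx N, u j k ^ 4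
        ≤ ∑ j ∈ cellIdx N, ∑ k ∈ cellIdx N, A k * B j :=
          Finset.sum_le_sum fun j hj => Finset.sum_le_sum fun k hk => point j hj k hk
      _ = ∑ k ∈ cellIdx N, ∑ j ∈ cellIdx N, A k * B j := Finset.sum_comm
      _ = (∑ k ∈ cellIdx N, A k) * (∑ j ∈ cellIdx N, B j) :=
          (Finset.sum_mul_sum _ _ _ _).symm
  have hAsum : ∑ k ∈ cellIdx N, A k ≤ Q * (N : ℝ)⁻¹ + 2 * Real.sqrt Q * Real.sqrt GY := by
    have e1 : ∑ k ∈ cellIdx N, A k = (N : ℝ)⁻¹ * Q +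
        ∑ k ∈ cellIdx N, ∑ l ∈ faceIdx N, |u (l + 1) k ^ 2 - u l k ^ 2| := by
      rw [hAdef, Finset.sum_add_distrib, ← Finset.mul_sum, hQdef]
      congr 2
      exact Finset.sum_comm
    have e2 : ∑ k ∈ cellIdx N, ∑ l ∈ faceIdx N, |u (l + 1) k ^ 2 - u l k ^ 2| ≤
        2 * Real.sqrt Q * Real.sqrt GY := by
      have hcs := tv_sq2 (cellIdx N) (faceIdx N) (fun k m => u (m + 1) k) (fun k m => u m k)
      have hd : ∑ k ∈ cellIdx N, ∑ m ∈ faceIdx N, (u (m + 1) k - u m k) ^ 2 = GY := by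
        rw [hGYdef]
        exact Finset.sum_comm
      have h4Q : ∑ k ∈ cellIdx N, ∑ l ∈ faceIdx N,
          (2 * u (l + 1) k ^ 2 + 2 * u l k ^ 2) ≤ 4 * Q := by
        have hk : ∀ k ∈ cellIdx N,
            ∑ l ∈ faceIdx N, (2 * u (l + 1) k ^ 2 + 2 * u l k ^ 2) ≤
              4 * ∑ m ∈ cellIdx N, u m k ^ 2 := by
          intro k _
          rw [Finset.sum_add_distrib, ← Finset.mul_sum, ← Finset.mul_sum]
          have hs1 := sum_shift_le (N := N) (fun m => u m k ^ 2) (fun m _ => sq_nonneg _)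
          have hs2 := sum_face_le (N := N) (fun m => u m k ^ 2) (fun m _ => sq_nonneg _)
          linarith
        calc ∑ k ∈ cellIdx N, ∑ l ∈ faceIdx N, (2 * u (l + 1) k ^ 2 + 2 * u l k ^ 2)
            ≤ ∑ k ∈ cellIdx N, 4 * ∑ m ∈ cellIdx N, u m k ^ 2 := Finset.sum_le_sum hk
          _ = 4 * Q := by
              rw [← Finset.mul_sum, hQdef]
              congr 1
              exact Finset.sum_comm
      rw [hd] at hcs
      refine hcs.trans ?_
      calc Real.sqrt (∑ k ∈ cellIdx N, ∑ l ∈ faceIdx N,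
              (2 * u (l + 1) k ^ 2 + 2 * u l k ^ 2)) * Real.sqrt GY
          ≤ Real.sqrt (4 * Q) * Real.sqrt GY :=
            mul_le_mul_of_nonneg_right (Real.sqrt_le_sqrt h4Q) (Real.sqrt_nonneg _)
        _ = 2 * Real.sqrt Q * Real.sqrt GY := by rw [sqrt_four_mul Q hQ0]
    rw [e1]
    linarith
  have hBsum : ∑ j ∈ cellIdx N, B j ≤ Q * (N : ℝ)⁻¹ + 2 * Real.sqrt Q * Real.sqrt GZ := by
    have e1 : ∑ j ∈ cellIdx N, B j = (N : ℝ)⁻¹ * Q +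
        ∑ j ∈ cellIdx N, ∑ l ∈ faceIdx N, |u j (l + 1) ^ 2 - u j l ^ 2| := by
      rw [hBdef, Finset.sum_add_distrib, ← Finset.mul_sum, hQdef]
    have e2 : ∑ j ∈ cellIdx N, ∑ l ∈ faceIdx N, |u j (l + 1) ^ 2 - u j l ^ 2| ≤
        2 * Real.sqrt Q * Real.sqrt GZ := by
      have hcs := tv_sq2 (cellIdx N) (faceIdx N) (fun j m => u j (m + 1)) (fun j m => u j m)
      have hd : ∑ j ∈ cellIdx N, ∑ m ∈ faceIdx N, (u j (m + 1) - u j m) ^ 2 = GZ := by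
        rw [hGZdef]
      have h4Q : ∑ j ∈ cellIdx N, ∑ l ∈ faceIdx N,
          (2 * u j (l + 1) ^ 2 + 2 * u j l ^ 2) ≤ 4 * Q := by
        have hj : ∀ j ∈ cellIdx N,
            ∑ l ∈ faceIdx N, (2 * u j (l + 1) ^ 2 + 2 * u j l ^ 2) ≤
              4 * ∑ m ∈ cellIdx N, u j m ^ 2 := by
          intro j _
          rw [Finset.sum_add_distrib, ← Finset.mul_sum, ← Finset.mul_sum]
          have hs1 := sum_shift_le (N := N) (fun m => u j m ^ 2) (fun m _ => sq_nonneg _)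
          have hs2 := sum_face_le (N := N) (fun m => u j m ^ 2) (fun m _ => sq_nonneg _)
          linarith
        calc ∑ j ∈ cellIdx N, ∑ l ∈ faceIdx N, (2 * u j (l + 1) ^ 2 + 2 * u j l ^ 2)
            ≤ ∑ j ∈ cellIdx N, 4 * ∑ m ∈ cellIdx N, u j m ^ 2 := Finset.sum_le_sum hj
          _ = 4 * Q := by rw [← Finset.mul_sum, hQdef]
      rw [hd] at hcs
      refine hcs.trans ?_
      calc Real.sqrt (∑ j ∈ cellIdx N, ∑ l ∈ faceIdx N,
              (2 * u j (l + 1) ^ 2 + 2 * u j l ^ 2)) * Real.sqrt GZ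
          ≤ Real.sqrt (4 * Q) * Real.sqrt GZ :=
            mul_le_mul_of_nonneg_right (Real.sqrt_le_sqrt h4Q) (Real.sqrt_nonneg _)
        _ = 2 * Real.sqrt Q * Real.sqrt GZ := by rw [sqrt_four_mul Q hQ0]
    rw [e1]
    linarith
  have hABnn : 0 ≤ ∑ j ∈ cellIdx N, B j := Finset.sum_nonneg fun j _ => hB0 j
  have hR1nn : 0 ≤ Q * (N : ℝ)⁻¹ + 2 * Real.sqrt Q * Real.sqrt GY :=
    add_nonneg (mul_nonneg hQ0 (by positivity))
      (mul_nonneg (mul_nonneg (by norm_num) (Real.sqrt_nonneg _)) (Real.sqrt_nonneg _))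
  have hAB : (∑ k ∈ cellIdx N, A k) * (∑ j ∈ cellIdx N, B j) ≤
      (Q * (N : ℝ)⁻¹ + 2 * Real.sqrt Q * Real.sqrt GY) *
      (Q * (N : ℝ)⁻¹ + 2 * Real.sqrt Q * Real.sqrt GZ) :=
    mul_le_mul hAsum hBsum hABnn hR1nn
  refine step1.trans (hAB.trans ?_)
  have hx := Real.sq_sqrt hQ0
  have hy := Real.sq_sqrt hGY0
  have hz := Real.sq_sqrt hGZ0
  set x := Real.sqrt Q
  set y := Real.sqrt GY
  set z := Real.sqrt GZ
  have hx0 : 0 ≤ x := Real.sqrt_nonneg _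
  have hy0 : 0 ≤ y := Real.sqrt_nonneg _
  have hz0 : 0 ≤ z := Real.sqrt_nonneg _
  have hw0 : 0 ≤ (N : ℝ)⁻¹ := by positivity
  rw [← hx, ← hy, ← hz]
  nlinarith [sq_nonneg (x ^ 2 * (N : ℝ)⁻¹ - x * y), sq_nonneg (x ^ 2 * (N : ℝ)⁻¹ - x * z),
    mul_nonneg (sq_nonneg x) (sq_nonneg (y - z)), hx0, hy0, hz0, hw0,
    mul_nonneg hx0 hy0, mul_nonneg hx0 hz0]

/-- Slice mass. -/
private def Qf (N : ℕ) (g : ℤ → ℤ → ℤ → ℝ) (i : ℤ) : ℝ :=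
  ∑ j ∈ cellIdx N, ∑ k ∈ cellIdx N, g i j k ^ 2

/-- Total mass. -/
private def S2f (N : ℕ) (g : ℤ → ℤ → ℤ → ℝ) : ℝ := ∑ i ∈ cellIdx N, Qf N g i

/-- Total squared x-differences. -/
private def GXf (N : ℕ) (g : ℤ → ℤ → ℤ → ℝ) : ℝ :=
  ∑ l ∈ faceIdx N, ∑ j ∈ cellIdx N, ∑ k ∈ cellIdx N, (g (l + 1) j k - g l j k) ^ 2

/-- Squared y-differences on the slice `i`. -/
private def GYs (N : ℕ) (g : ℤ → ℤ → ℤ → ℝ) (i : ℤ) : ℝ :=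
  ∑ m ∈ faceIdx N, ∑ k ∈ cellIdx N, (g i (m + 1) k - g i m k) ^ 2

/-- Squared z-differences on the slice `i`. -/
private def GZs (N : ℕ) (g : ℤ → ℤ → ℤ → ℝ) (i : ℤ) : ℝ :=
  ∑ j ∈ cellIdx N, ∑ m ∈ faceIdx N, (g i j (m + 1) - g i j m) ^ 2

/-- Core 3D discrete Sobolev-type inequality for an arbitrary grid function. -/
private lemma core3D (N : ℕ) (hN : 0 < N) (g : ℤ → ℤ → ℤ → ℝ) :
    ∑ i ∈ cellIdx N, ∑ j ∈ cellIdx N, ∑ k ∈ cellIdx N, g i j k ^ 4 ≤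
      3 * (S2f N g * (N : ℝ)⁻¹ + 2 * Real.sqrt (S2f N g) * Real.sqrt (GXf N g)) *
        (S2f N g * ((N : ℝ)⁻¹) ^ 2 + (∑ i ∈ cellIdx N, GYs N g i) +
          (∑ i ∈ cellIdx N, GZs N g i)) := by
  have hQ0 : ∀ i, 0 ≤ Qf N g i := fun i =>
    Finset.sum_nonneg fun _ _ => Finset.sum_nonneg fun _ _ => sq_nonneg _
  have hGYf0 : ∀ i, 0 ≤ GYs N g i := fun i =>
    Finset.sum_nonneg fun _ _ => Finset.sum_nonneg fun _ _ => sq_nonneg _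
  have hGZf0 : ∀ i, 0 ≤ GZs N g i := fun i =>
    Finset.sum_nonneg fun _ _ => Finset.sum_nonneg fun _ _ => sq_nonneg _
  have hS20 : 0 ≤ S2f N g := Finset.sum_nonneg fun i _ => hQ0 i
  have hGX0 : 0 ≤ GXf N g :=
    Finset.sum_nonneg fun _ _ =>
      Finset.sum_nonneg fun _ _ => Finset.sum_nonneg fun _ _ => sq_nonneg _
  have hQmax : ∀ i ∈ cellIdx N, Qf N g i ≤
      S2f N g * (N : ℝ)⁻¹ + 2 * Real.sqrt (S2f N g) * Real.sqrt (GXf N g) := by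
    intro i hi
    have h1 := agmon1 hN (Qf N g) hi
    have htv : ∑ l ∈ faceIdx N, |Qf N g (l + 1) - Qf N g l| ≤
        2 * Real.sqrt (S2f N g) * Real.sqrt (GXf N g) := by
      have hpt : ∀ l ∈ faceIdx N, |Qf N g (l + 1) - Qf N g l| ≤
          ∑ j ∈ cellIdx N, ∑ k ∈ cellIdx N, |g (l + 1) j k ^ 2 - g l j k ^ 2| := by
        intro l _
        have hd : Qf N g (l + 1) - Qf N g l =
            ∑ j ∈ cellIdx N, ∑ k ∈ cellIdx N, (g (l + 1) j k ^ 2 - g l j k ^ 2) := by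
          unfold Qf
          rw [← Finset.sum_sub_distrib]
          exact Finset.sum_congr rfl fun j _ => (Finset.sum_sub_distrib _ _).symm
        rw [hd]
        refine (Finset.abs_sum_le_sum_abs _ _).trans ?_
        exact Finset.sum_le_sum fun j _ => Finset.abs_sum_le_sum_abs _ _
      refine (Finset.sum_le_sum hpt).trans ?_
      have hcs := tv_sq3 (faceIdx N) (cellIdx N) (cellIdx N)
        (fun l j k => g (l + 1) j k) (fun l j k => g l j k)
      have hGXeq : ∑ l ∈ faceIdx N, ∑ j ∈ cellIdx N, ∑ k ∈ cellIdx N,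
          (g (l + 1) j k - g l j k) ^ 2 = GXf N g := rfl
      have h4S : ∑ l ∈ faceIdx N, ∑ j ∈ cellIdx N, ∑ k ∈ cellIdx N,
          (2 * g (l + 1) j k ^ 2 + 2 * g l j k ^ 2) ≤ 4 * S2f N g := by
        have hl : ∀ l ∈ faceIdx N,
            ∑ j ∈ cellIdx N, ∑ k ∈ cellIdx N,
              (2 * g (l + 1) j k ^ 2 + 2 * g l j k ^ 2) =
            2 * Qf N g (l + 1) + 2 * Qf N g l := by
          intro l _
          unfold Qf
          rw [Finset.mul_sum, Finset.mul_sum, ← Finset.sum_add_distrib]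
          refine Finset.sum_congr rfl fun j _ => ?_
          rw [Finset.mul_sum, Finset.mul_sum, ← Finset.sum_add_distrib]
        rw [Finset.sum_congr rfl hl, Finset.sum_add_distrib, ← Finset.mul_sum,
          ← Finset.mul_sum]
        have hs1 := sum_shift_le (N := N) (Qf N g) (fun m _ => hQ0 m)
        have hs2 := sum_face_le (N := N) (Qf N g) (fun m _ => hQ0 m)
        have hS2eq : (∑ m ∈ cellIdx N, Qf N g m) = S2f N g := rfl
        rw [hS2eq] at hs1 hs2
        linarith
      rw [hGXeq] at hcs
      refine hcs.trans ?_
      calc Real.sqrt (∑ l ∈ faceIdx N, ∑ j ∈ cellIdx N, ∑ k ∈ cellIdx N,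
              (2 * g (l + 1) j k ^ 2 + 2 * g l j k ^ 2)) * Real.sqrt (GXf N g)
          ≤ Real.sqrt (4 * S2f N g) * Real.sqrt (GXf N g) :=
            mul_le_mul_of_nonneg_right (Real.sqrt_le_sqrt h4S) (Real.sqrt_nonneg _)
        _ = 2 * Real.sqrt (S2f N g) * Real.sqrt (GXf N g) := by
            rw [sqrt_four_mul (S2f N g) hS20]
    have hS2eq : (∑ m ∈ cellIdx N, Qf N g m) = S2f N g := rfl
    rw [hS2eq] at h1
    have hcomm : (N : ℝ)⁻¹ * S2f N g = S2f N g * (N : ℝ)⁻¹ := by ring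
    linarith
  have hsl : ∀ i ∈ cellIdx N, ∑ j ∈ cellIdx N, ∑ k ∈ cellIdx N, g i j k ^ 4 ≤
      3 * ((Qf N g i) ^ 2 * ((N : ℝ)⁻¹) ^ 2 + Qf N g i * GYs N g i +
        Qf N g i * GZs N g i) := by
    intro i _
    exact slice2D N hN (fun j k => g i j k)
  have step : ∑ i ∈ cellIdx N, ∑ j ∈ cellIdx N, ∑ k ∈ cellIdx N, g i j k ^ 4 ≤
      ∑ i ∈ cellIdx N,
        3 * ((S2f N g * (N : ℝ)⁻¹ + 2 * Real.sqrt (S2f N g) * Real.sqrt (GXf N g)) *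
          (Qf N g i * ((N : ℝ)⁻¹) ^ 2 + GYs N g i + GZs N g i)) := by
    refine Finset.sum_le_sum fun i hi => ?_
    refine (hsl i hi).trans ?_
    have h1 : (Qf N g i) ^ 2 * ((N : ℝ)⁻¹) ^ 2 ≤
        (S2f N g * (N : ℝ)⁻¹ + 2 * Real.sqrt (S2f N g) * Real.sqrt (GXf N g)) *
          (Qf N g i * ((N : ℝ)⁻¹) ^ 2) := by
      have h2 := mul_le_mul_of_nonneg_right (hQmax i hi)
        (mul_nonneg (hQ0 i) (by positivity : (0:ℝ) ≤ ((N : ℝ)⁻¹) ^ 2))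
      calc (Qf N g i) ^ 2 * ((N : ℝ)⁻¹) ^ 2
          = Qf N g i * (Qf N g i * ((N : ℝ)⁻¹) ^ 2) := by ring
        _ ≤ _ := h2
    have h2 : Qf N g i * GYs N g i ≤
        (S2f N g * (N : ℝ)⁻¹ + 2 * Real.sqrt (S2f N g) * Real.sqrt (GXf N g)) *
          GYs N g i :=
      mul_le_mul_of_nonneg_right (hQmax i hi) (hGYf0 i)
    have h3 : Qf N g i * GZs N g i ≤
        (S2f N g * (N : ℝ)⁻¹ + 2 * Real.sqrt (S2f N g) * Real.sqrt (GXf N g)) *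
          GZs N g i :=
      mul_le_mul_of_nonneg_right (hQmax i hi) (hGZf0 i)
    nlinarith [h1, h2, h3]
  refine step.trans ?_
  rw [← Finset.mul_sum, ← Finset.mul_sum]
  have hfin : ∑ i ∈ cellIdx N, (Qf N g i * ((N : ℝ)⁻¹) ^ 2 + GYs N g i + GZs N g i) =
      S2f N g * ((N : ℝ)⁻¹) ^ 2 + (∑ i ∈ cellIdx N, GYs N g i) +
        (∑ i ∈ cellIdx N, GZs N g i) := by
    rw [Finset.sum_add_distrib, Finset.sum_add_distrib, ← Finset.sum_mul]
    rfl
  rw [hfin]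
  exact le_of_eq (by ring)

private lemma le_one_add_pow_four (c : ℝ) (hc : 0 ≤ c) : c ≤ (1 + c) ^ 4 := by
  nlinarith [pow_nonneg hc 2, pow_nonneg hc 3, pow_nonneg hc 4]

end SobolevAux

/-- discrete Sobolev embedding: there is a constant `C > 0`
depending only on `L` such that for every positive integer `N` (with `h = L/N`)
and every cell-centered grid function `f` on `(0,L)³`,
`‖f‖₄ ≤ C (‖f‖₂² + ‖∇_h f‖₂²)^{1/2}`. -/
theorem discrete_sobolev (L : ℝ) (hL : 0 < L) :
    ∃ C : ℝ, 0 < C ∧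
      ∀ N : ℕ, 0 < N → ∀ f : ℤ → ℤ → ℤ → ℝ,
        cNormP N (L / N) 4 f ≤
          C * Real.sqrt (cip N (L / N) f f + gradSq N (L / N) f) := by
  classical
  refine ⟨1 + 3 * (1 + 1 / L) * (1 + 1 / L ^ 2), by positivity, ?_⟩
  intro N hN f
  have hNR : (0 : ℝ) < (N : ℝ) := by exact_mod_cast hN
  set h : ℝ := L / (N : ℝ) with hhdef
  have hhpos : 0 < h := by rw [hhdef]; positivity
  have hNh : (N : ℝ)⁻¹ = h / L := by
    rw [hhdef]
    field_simp
  set g : ℤ → ℤ → ℤ → ℝ := nExt N f with hgdef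
  have hgf : ∀ i ∈ cellIdx N, ∀ j ∈ cellIdx N, ∀ k ∈ cellIdx N, g i j k = f i j k := by
    intro i hi j hj k hk
    rw [hgdef]
    unfold nExt
    rw [clamp_eq (mem_cell.mp hi).1 (mem_cell.mp hi).2,
      clamp_eq (mem_cell.mp hj).1 (mem_cell.mp hj).2,
      clamp_eq (mem_cell.mp hk).1 (mem_cell.mp hk).2]
  have hcore := core3D N hN g
  -- identification of cip
  have hcip : cip N h f f = h ^ 3 * S2f N g := by
    unfold cip S2f Qf
    congr 1
    refine Finset.sum_congr rfl fun i hi => ?_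
    refine Finset.sum_congr rfl fun j hj => ?_
    refine Finset.sum_congr rfl fun k hk => ?_
    rw [hgf i hi j hj k hk]
    ring
  -- identification of gradSq
  have hx2 : ∑ i ∈ faceIdx N, ∑ j ∈ cellIdx N, ∑ k ∈ cellIdx N, Dx N h f i j k ^ 2
      = GXf N g / h ^ 2 := by
    unfold Dx GXf
    rw [← hgdef]
    simp only [div_pow, ← Finset.sum_div]
  have hy2 : ∑ i ∈ cellIdx N, ∑ j ∈ faceIdx N, ∑ k ∈ cellIdx N, Dy N h f i j k ^ 2
      = (∑ i ∈ cellIdx N, GYs N g i) / h ^ 2 := by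
    unfold Dy GYs
    rw [← hgdef]
    simp only [div_pow, ← Finset.sum_div]
  have hz2 : ∑ i ∈ cellIdx N, ∑ j ∈ cellIdx N, ∑ k ∈ faceIdx N, Dz N h f i j k ^ 2
      = (∑ i ∈ cellIdx N, GZs N g i) / h ^ 2 := by
    unfold Dz GZs
    rw [← hgdef]
    simp only [div_pow, ← Finset.sum_div]
  have hgrad : gradSq N h f =
      h * (GXf N g + (∑ i ∈ cellIdx N, GYs N g i) + (∑ i ∈ cellIdx N, GZs N g i)) := by
    unfold gradSq
    rw [hx2, hy2, hz2]
    field_simp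
  -- identification of the fourth-power sum
  have hsum4 : ∑ i ∈ cellIdx N, ∑ j ∈ cellIdx N, ∑ k ∈ cellIdx N, |f i j k| ^ (4:ℝ)
      = ∑ i ∈ cellIdx N, ∑ j ∈ cellIdx N, ∑ k ∈ cellIdx N, g i j k ^ 4 := by
    refine Finset.sum_congr rfl fun i hi => ?_
    refine Finset.sum_congr rfl fun j hj => ?_
    refine Finset.sum_congr rfl fun k hk => ?_
    rw [hgf i hi j hj k hk]
    rw [show (4:ℝ) = ((4:ℕ):ℝ) by norm_num, Real.rpow_natCast, pow_abs,
      abs_of_nonneg (by positivity : (0:ℝ) ≤ f i j k ^ 4)]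
  -- abbreviations
  set S2 : ℝ := S2f N g with hS2def
  set GX : ℝ := GXf N g with hGXdef
  set GYt : ℝ := ∑ i ∈ cellIdx N, GYs N g i with hGYdef
  set GZt : ℝ := ∑ i ∈ cellIdx N, GZs N g i with hGZdef
  have hS2nn : 0 ≤ S2 := by
    rw [hS2def]
    exact Finset.sum_nonneg fun _ _ =>
      Finset.sum_nonneg fun _ _ => Finset.sum_nonneg fun _ _ => sq_nonneg _
  have hGXnn : 0 ≤ GX := by
    rw [hGXdef]
    exact Finset.sum_nonneg fun _ _ =>
      Finset.sum_nonneg fun _ _ => Finset.sum_nonneg fun _ _ => sq_nonneg _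
  have hGYnn : 0 ≤ GYt := by
    rw [hGYdef]
    exact Finset.sum_nonneg fun _ _ =>
      Finset.sum_nonneg fun _ _ => Finset.sum_nonneg fun _ _ => sq_nonneg _
  have hGZnn : 0 ≤ GZt := by
    rw [hGZdef]
    exact Finset.sum_nonneg fun _ _ =>
      Finset.sum_nonneg fun _ _ => Finset.sum_nonneg fun _ _ => sq_nonneg _
  have hS4nn : 0 ≤ ∑ i ∈ cellIdx N, ∑ j ∈ cellIdx N, ∑ k ∈ cellIdx N, g i j k ^ 4 :=
    Finset.sum_nonneg fun _ _ =>
      Finset.sum_nonneg fun _ _ => Finset.sum_nonneg fun _ _ => by positivity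
  set E : ℝ := cip N h f f + gradSq N h f with hEdef
  clear_value E GZt GYt GX S2 g h
  have hEexp : E = h ^ 3 * S2 + h * GX + h * GYt + h * GZt := by
    rw [hEdef, hcip, hgrad]
    ring
  have hgx : 0 ≤ h * GX := mul_nonneg hhpos.le hGXnn
  have hgy : 0 ≤ h * GYt := mul_nonneg hhpos.le hGYnn
  have hgz : 0 ≤ h * GZt := mul_nonneg hhpos.le hGZnn
  have hs2h : 0 ≤ h ^ 3 * S2 := mul_nonneg (by positivity) hS2nn
  have hE0 : 0 ≤ E := by
    rw [hEexp]
    linarith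
  have hS2E : h ^ 3 * S2 ≤ E := by
    rw [hEexp]
    linarith
  have hSGE : h ^ 3 * S2 + h * GX ≤ E := by
    rw [hEexp]
    linarith
  have hGGE : h * GYt + h * GZt ≤ E := by
    rw [hEexp]
    linarith
  have hsq2 := Real.sq_sqrt hS2nn
  have hsqx := Real.sq_sqrt hGXnn
  -- scaling bound 1
  have hB1 : h ^ 2 * (S2 * (N : ℝ)⁻¹ + 2 * Real.sqrt S2 * Real.sqrt GX) ≤ (1 + 1 / L) * E := by
    have key0 : ∀ a b : ℝ, 2 * h ^ 2 * (a * b) ≤ h ^ 3 * a ^ 2 + h * b ^ 2 := by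
      intro a b
      nlinarith [mul_nonneg hhpos.le (sq_nonneg (h * a - b))]
    have key : 2 * h ^ 2 * (Real.sqrt S2 * Real.sqrt GX) ≤ h ^ 3 * S2 + h * GX := by
      have := key0 (Real.sqrt S2) (Real.sqrt GX)
      rw [hsq2, hsqx] at this
      exact this
    have hdivL : h ^ 3 * S2 / L ≤ E / L := by
      rw [div_eq_mul_inv, div_eq_mul_inv]
      exact mul_le_mul_of_nonneg_right hS2E (inv_nonneg.mpr hL.le)
    rw [hNh, show h ^ 2 * (S2 * (h / L) + 2 * Real.sqrt S2 * Real.sqrt GX)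
      = h ^ 3 * S2 / L + 2 * h ^ 2 * (Real.sqrt S2 * Real.sqrt GX) by ring,
      show (1 + 1 / L) * E = E + E / L by ring]
    linarith
  -- scaling bound 2
  have hB2 : h * (S2 * ((N : ℝ)⁻¹) ^ 2 + GYt + GZt) ≤ (1 + 1 / L ^ 2) * E := by
    have hdiv2 : h ^ 3 * S2 / L ^ 2 ≤ E / L ^ 2 := by
      rw [div_eq_mul_inv, div_eq_mul_inv]
      exact mul_le_mul_of_nonneg_right hS2E (by positivity)
    rw [hNh, show h * (S2 * (h / L) ^ 2 + GYt + GZt)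
      = h ^ 3 * S2 / L ^ 2 + (h * GYt + h * GZt) by ring,
      show (1 + 1 / L ^ 2) * E = E + E / L ^ 2 by ring]
    linarith
  -- combine
  have hRnn : 0 ≤ S2 * ((N : ℝ)⁻¹) ^ 2 + GYt + GZt :=
    add_nonneg (add_nonneg (mul_nonneg hS2nn (by positivity)) hGYnn) hGZnn
  have hEL1 : 0 ≤ (1 + 1 / L) * E := mul_nonneg (by positivity) hE0
  have chain : h ^ 3 * (∑ i ∈ cellIdx N, ∑ j ∈ cellIdx N, ∑ k ∈ cellIdx N, g i j k ^ 4) ≤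
      3 * ((1 + 1 / L) * E) * ((1 + 1 / L ^ 2) * E) := by
    calc h ^ 3 * (∑ i ∈ cellIdx N, ∑ j ∈ cellIdx N, ∑ k ∈ cellIdx N, g i j k ^ 4)
        ≤ h ^ 3 * (3 * (S2 * (N : ℝ)⁻¹ + 2 * Real.sqrt S2 * Real.sqrt GX) *
            (S2 * ((N : ℝ)⁻¹) ^ 2 + GYt + GZt)) :=
          mul_le_mul_of_nonneg_left hcore (by positivity)
      _ = 3 * (h ^ 2 * (S2 * (N : ℝ)⁻¹ + 2 * Real.sqrt S2 * Real.sqrt GX)) *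
            (h * (S2 * ((N : ℝ)⁻¹) ^ 2 + GYt + GZt)) := by ring
      _ ≤ 3 * ((1 + 1 / L) * E) * (h * (S2 * ((N : ℝ)⁻¹) ^ 2 + GYt + GZt)) :=
          mul_le_mul_of_nonneg_right
            (mul_le_mul_of_nonneg_left hB1 (by norm_num : (0:ℝ) ≤ 3))
            (mul_nonneg hhpos.le hRnn)
      _ ≤ 3 * ((1 + 1 / L) * E) * ((1 + 1 / L ^ 2) * E) :=
          mul_le_mul_of_nonneg_left hB2 (mul_nonneg (by norm_num : (0:ℝ) ≤ 3) hEL1)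
  have hC1 : (1:ℝ) ≤ 1 + 3 * (1 + 1 / L) * (1 + 1 / L ^ 2) :=
    (le_add_iff_nonneg_right 1).mpr (by positivity)
  have hC4 : 3 * (1 + 1 / L) * (1 + 1 / L ^ 2) ≤
      (1 + 3 * (1 + 1 / L) * (1 + 1 / L ^ 2)) ^ 4 :=
    le_one_add_pow_four _ (by positivity)
  have hfinal : h ^ 3 * (∑ i ∈ cellIdx N, ∑ j ∈ cellIdx N, ∑ k ∈ cellIdx N, g i j k ^ 4) ≤
      (1 + 3 * (1 + 1 / L) * (1 + 1 / L ^ 2)) ^ 4 * E ^ 2 := by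
    refine chain.trans ?_
    have he : 3 * ((1 + 1 / L) * E) * ((1 + 1 / L ^ 2) * E)
        = (3 * (1 + 1 / L) * (1 + 1 / L ^ 2)) * E ^ 2 := by ring
    rw [he]
    exact mul_le_mul_of_nonneg_right hC4 (sq_nonneg E)
  -- conclusion via rpow algebra
  unfold cNormP
  rw [hsum4]
  have hX0 : 0 ≤ h ^ 3 * (∑ i ∈ cellIdx N, ∑ j ∈ cellIdx N, ∑ k ∈ cellIdx N, g i j k ^ 4) :=
    mul_nonneg (by positivity) hS4nn
  have hstep := Real.rpow_le_rpow hX0 hfinal (by norm_num : (0:ℝ) ≤ 1 / 4)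
  refine hstep.trans (le_of_eq ?_)
  have hCE : (0:ℝ) ≤ (1 + 3 * (1 + 1 / L) * (1 + 1 / L ^ 2)) ^ 2 * E :=
    mul_nonneg (by positivity) hE0
  rw [show (1 + 3 * (1 + 1 / L) * (1 + 1 / L ^ 2)) ^ 4 * E ^ 2
    = ((1 + 3 * (1 + 1 / L) * (1 + 1 / L ^ 2)) ^ 2 * E) ^ 2 by ring]
  rw [← Real.rpow_natCast ((1 + 3 * (1 + 1 / L) * (1 + 1 / L ^ 2)) ^ 2 * E) 2,
    ← Real.rpow_mul hCE, show ((2:ℕ):ℝ) * (1 / 4) = 1 / 2 by norm_num,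
    ← Real.sqrt_eq_rpow]
  rw [Real.sqrt_mul (by positivity : (0:ℝ) ≤ (1 + 3 * (1 + 1 / L) * (1 + 1 / L ^ 2)) ^ 2),
    Real.sqrt_sq (by positivity : (0:ℝ) ≤ 1 + 3 * (1 + 1 / L) * (1 + 1 / L ^ 2))]
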